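/- In ℓ²(ℕ) with standard orthonormal basis {e_n}_{n=0}^∞, the sequence {f_n}_{n=0}^∞ defined by f_0 = 0 and f_n = n·e_n for n ≥ 1 is an ICFC sequence (there exists an injective bounded linear operator B on ℓ²(ℕ) such that {B f_n} is a Parseval frame for ℓ²(ℕ)), yet the closed linear span of {f_n}_{n=0}^∞ is a proper subspace of ℓ²(ℕ). -/

import Mathlib

open scoped ComplexInnerProductSpace ENNReal

/-- The sequence `f_0 = 0`, `f_n = n • e_n` in `ℓ²(ℕ)`. -/
noncomputable def stmt6Seq : ℕ → lp (fun _ : ℕ => ℂ) 2 :=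
  fun n => if n = 0 then 0 else (n : ℂ) • lp.single 2 n 1

noncomputable section StmtAux

local notation "Hl2" => lp (fun _ : ℕ => ℂ) 2

private lemma stmt6_ptr : (2 : ℝ≥0∞).toReal = 2 := by norm_num
private lemma stmt6_ptrpos : (0:ℝ) < (2 : ℝ≥0∞).toReal := by norm_num

private lemma stmt6_summable_sq (a : Hl2) : Summable (fun k : ℕ => ‖a k‖ ^ (2:ℕ)) := by
  have := (lp.memℓp a).summable stmt6_ptrpos
  simpa [stmt6_ptr, Real.rpow_natCast] using this

/-- The underlying function of the operator `B`. -/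
private def stmt6Bfun (a : Hl2) : ∀ _ : ℕ, ℂ :=
  fun k => (((k:ℕ)+1 : ℝ))⁻¹ • (a (k+1) + a 0)

private def stmt6S : ℝ := ∑' k : ℕ, ((((k:ℕ)+1:ℝ))⁻¹) ^ (2:ℕ)

private lemma stmt6S_summable : Summable (fun k : ℕ => ((((k:ℕ)+1:ℝ))⁻¹) ^ (2:ℕ)) := by
  have h : Summable (fun k : ℕ => (1 : ℝ) / (k:ℝ) ^ (2:ℕ)) :=
    Real.summable_one_div_nat_pow.2 one_lt_two
  have := (summable_nat_add_iff (f := fun k : ℕ => (1:ℝ)/(k:ℝ)^(2:ℕ)) 1).2 h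
  simpa [one_div, inv_pow] using this

private lemma stmt6S_nonneg : 0 ≤ stmt6S := tsum_nonneg (fun k => by positivity)

private lemma stmt6_mem_f1 (a : Hl2) :
    Memℓp (fun k : ℕ => (((k:ℕ)+1:ℝ))⁻¹ • a (k+1)) 2 := by
  apply memℓp_gen
  have hs : Summable (fun k : ℕ => ‖a (k+1)‖ ^ (2:ℕ)) :=
    (summable_nat_add_iff (f := fun k => ‖a k‖ ^ (2:ℕ)) 1).2 (stmt6_summable_sq a)
  have : Summable (fun k : ℕ => ‖(((k:ℕ)+1:ℝ))⁻¹ • a (k+1)‖ ^ (2:ℕ)) := by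
    refine Summable.of_nonneg_of_le (fun k => by positivity) (fun k => ?_) hs
    have hk : ‖(((k:ℕ)+1:ℝ))⁻¹ • a (k+1)‖ ≤ ‖a (k+1)‖ := by
      rw [norm_smul, Real.norm_eq_abs, abs_of_nonneg (by positivity)]
      have h1 : (((k:ℕ)+1:ℝ))⁻¹ ≤ 1 := inv_le_one_of_one_le₀ (by exact_mod_cast Nat.le_add_left 1 k)
      nlinarith [norm_nonneg (a (k+1))]
    exact pow_le_pow_left₀ (norm_nonneg _) hk 2
  simpa [stmt6_ptr, Real.rpow_natCast] using this

private lemma stmt6_norm_f1_sq (a : Hl2) (k : ℕ) :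
    ‖(((k:ℕ)+1:ℝ))⁻¹ • a (k+1)‖ ^ (2:ℕ) ≤ ‖a (k+1)‖ ^ (2:ℕ) := by
  have hk : ‖(((k:ℕ)+1:ℝ))⁻¹ • a (k+1)‖ ≤ ‖a (k+1)‖ := by
    rw [norm_smul, Real.norm_eq_abs, abs_of_nonneg (by positivity)]
    have h1 : (((k:ℕ)+1:ℝ))⁻¹ ≤ 1 := inv_le_one_of_one_le₀ (by exact_mod_cast Nat.le_add_left 1 k)
    nlinarith [norm_nonneg (a (k+1))]
  exact pow_le_pow_left₀ (norm_nonneg _) hk 2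

private lemma stmt6_norm_f2_sq (a : Hl2) (k : ℕ) :
    ‖(((k:ℕ)+1:ℝ))⁻¹ • a 0‖ ^ (2:ℕ) = ((((k:ℕ)+1:ℝ))⁻¹) ^ (2:ℕ) * ‖a 0‖ ^ (2:ℕ) := by
  rw [norm_smul, mul_pow, Real.norm_eq_abs, abs_of_nonneg (by positivity)]

private lemma stmt6_mem_f2 (a : Hl2) :
    Memℓp (fun k : ℕ => (((k:ℕ)+1:ℝ))⁻¹ • a 0) 2 := by
  apply memℓp_gen
  have : Summable (fun k : ℕ => ‖(((k:ℕ)+1:ℝ))⁻¹ • a 0‖ ^ (2:ℕ)) := by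
    have := stmt6S_summable.mul_right (‖a 0‖ ^ (2:ℕ))
    exact this.congr fun k => (stmt6_norm_f2_sq a k).symm
  simpa [stmt6_ptr, Real.rpow_natCast] using this

private lemma stmt6_mem_B (a : Hl2) : Memℓp (stmt6Bfun a) 2 := by
  have heq : stmt6Bfun a = (fun k : ℕ => (((k:ℕ)+1:ℝ))⁻¹ • a (k+1))
      + (fun k : ℕ => (((k:ℕ)+1:ℝ))⁻¹ • a 0) := by
    funext k; simp [stmt6Bfun, smul_add]
  rw [heq]; exact (stmt6_mem_f1 a).add (stmt6_mem_f2 a)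

/-- The operator `B` as a linear map. -/
private def stmt6Blin : Hl2 →ₗ[ℂ] Hl2 where
  toFun a := ⟨stmt6Bfun a, stmt6_mem_B a⟩
  map_add' a b := by
    apply lp.ext
    funext k
    have : ((⟨stmt6Bfun a, stmt6_mem_B a⟩ + ⟨stmt6Bfun b, stmt6_mem_B b⟩ : Hl2) : ∀ _ : ℕ, ℂ) k
        = stmt6Bfun a k + stmt6Bfun b k := rfl
    rw [this]
    show stmt6Bfun (a + b) k = _
    simp only [stmt6Bfun, lp.coeFn_add, Pi.add_apply, smul_add]
    ring_nf
  map_smul' c a := by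
    apply lp.ext
    funext k
    show stmt6Bfun (c • a) k = c • stmt6Bfun a k
    simp only [stmt6Bfun, lp.coeFn_smul, Pi.smul_apply, smul_add, smul_comm c]

private lemma stmt6_norm_lp_le {f : ∀ _ : ℕ, ℂ} (hf : Memℓp f 2) {C : ℝ} (hC : 0 ≤ C)
    (h : ∑' k, ‖f k‖ ^ (2:ℕ) ≤ C ^ (2:ℕ)) : ‖(⟨f, hf⟩ : Hl2)‖ ≤ C := by
  apply lp.norm_le_of_tsum_le stmt6_ptrpos hC
  have key : ∀ k : ℕ, ‖((⟨f, hf⟩ : Hl2) : ∀ _ : ℕ, ℂ) k‖ ^ ((2:ℝ≥0∞)).toReal = ‖f k‖ ^ (2:ℕ) := by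
    intro k; rw [stmt6_ptr]; norm_cast
  calc ∑' k, ‖((⟨f, hf⟩ : Hl2) : ∀ _ : ℕ, ℂ) k‖ ^ ((2:ℝ≥0∞)).toReal
      = ∑' k, ‖f k‖ ^ (2:ℕ) := tsum_congr fun k => key k
    _ ≤ C ^ (2:ℕ) := h
    _ = C ^ ((2:ℝ≥0∞)).toReal := by rw [stmt6_ptr]; norm_cast

private lemma stmt6_norm_sq_eq (a : Hl2) : ∑' k, ‖a k‖ ^ (2:ℕ) = ‖a‖ ^ (2:ℕ) := by
  have := lp.norm_rpow_eq_tsum stmt6_ptrpos a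
  rw [stmt6_ptr] at this
  simp only [← Real.rpow_natCast]
  exact_mod_cast this.symm

private lemma stmt6Blin_bound (a : Hl2) :
    ‖stmt6Blin a‖ ≤ (1 + Real.sqrt stmt6S) * ‖a‖ := by
  set x1 : Hl2 := ⟨fun k : ℕ => (((k:ℕ)+1:ℝ))⁻¹ • a (k+1), stmt6_mem_f1 a⟩ with hx1def
  set x2 : Hl2 := ⟨fun k : ℕ => (((k:ℕ)+1:ℝ))⁻¹ • a 0, stmt6_mem_f2 a⟩ with hx2def
  have hsplit : stmt6Blin a = x1 + x2 := by
    apply lp.ext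
    funext k
    have h2 : ((x1 + x2 : Hl2) : ∀ _ : ℕ, ℂ) k
        = (((k:ℕ)+1:ℝ))⁻¹ • a (k+1) + (((k:ℕ)+1:ℝ))⁻¹ • a 0 := rfl
    rw [h2]
    show stmt6Bfun a k = _
    simp [stmt6Bfun, smul_add]
  have hs1 : Summable (fun k : ℕ => ‖(((k:ℕ)+1:ℝ))⁻¹ • a (k+1)‖ ^ (2:ℕ)) := by
    have := (stmt6_mem_f1 a).summable stmt6_ptrpos
    simpa [stmt6_ptr, Real.rpow_natCast] using this
  have hsucc : Summable (fun k : ℕ => ‖a (k+1)‖ ^ (2:ℕ)) :=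
    (summable_nat_add_iff (f := fun k => ‖a k‖ ^ (2:ℕ)) 1).2 (stmt6_summable_sq a)
  have hb1 : ‖x1‖ ≤ ‖a‖ := by
    apply stmt6_norm_lp_le _ (norm_nonneg a)
    calc ∑' k : ℕ, ‖(((k:ℕ)+1:ℝ))⁻¹ • a (k+1)‖ ^ (2:ℕ)
        ≤ ∑' k : ℕ, ‖a (k+1)‖ ^ (2:ℕ) :=
          Summable.tsum_le_tsum (fun k => stmt6_norm_f1_sq a k) hs1 hsucc
      _ ≤ ∑' k : ℕ, ‖a k‖ ^ (2:ℕ) :=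
          tsum_comp_le_tsum_of_inj (stmt6_summable_sq a) (fun k => by positivity)
            Nat.succ_injective
      _ = ‖a‖ ^ (2:ℕ) := stmt6_norm_sq_eq a
  have hb2 : ‖x2‖ ≤ Real.sqrt stmt6S * ‖a 0‖ := by
    apply stmt6_norm_lp_le _ (by positivity)
    refine le_of_eq ?_
    calc ∑' k : ℕ, ‖(((k:ℕ)+1:ℝ))⁻¹ • a 0‖ ^ (2:ℕ)
        = ∑' k : ℕ, ((((k:ℕ)+1:ℝ))⁻¹) ^ (2:ℕ) * ‖a 0‖ ^ (2:ℕ) :=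
          tsum_congr fun k => stmt6_norm_f2_sq a k
      _ = stmt6S * ‖a 0‖ ^ (2:ℕ) := by rw [tsum_mul_right]; rfl
      _ = (Real.sqrt stmt6S * ‖a 0‖) ^ (2:ℕ) := by
          rw [mul_pow, Real.sq_sqrt stmt6S_nonneg]
  have h0 : ‖a 0‖ ≤ ‖a‖ := lp.norm_apply_le_norm two_ne_zero a 0
  calc ‖stmt6Blin a‖ = ‖x1 + x2‖ := by rw [hsplit]
    _ ≤ ‖x1‖ + ‖x2‖ := norm_add_le _ _
    _ ≤ ‖a‖ + Real.sqrt stmt6S * ‖a‖ := by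
        refine add_le_add hb1 (hb2.trans ?_)
        exact mul_le_mul_of_nonneg_left h0 (Real.sqrt_nonneg _)
    _ = (1 + Real.sqrt stmt6S) * ‖a‖ := by ring

/-- The operator `B` as a continuous linear map. -/
private def stmt6B : Hl2 →L[ℂ] Hl2 :=
  stmt6Blin.mkContinuous (1 + Real.sqrt stmt6S) stmt6Blin_bound

private lemma stmt6B_apply (a : Hl2) (k : ℕ) :
    (stmt6B a) k = (((k:ℕ)+1 : ℝ))⁻¹ • (a (k+1) + a 0) := rfl

private lemma stmt6B_injective : Function.Injective stmt6B := by
  intro a b hab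
  have h0 : stmt6B (a - b) = 0 := by rw [map_sub, hab, sub_self]
  set c : Hl2 := a - b with hc
  have hk : ∀ k : ℕ, (((k:ℕ)+1 : ℝ))⁻¹ • (c (k+1) + c 0) = 0 := by
    intro k
    have := congrArg (fun x : Hl2 => (x : ∀ _ : ℕ, ℂ) k) h0
    simpa [stmt6B_apply] using this
  have hsum : ∀ k : ℕ, c (k+1) = - c 0 := by
    intro k
    have h := hk k
    have hne : ((((k:ℕ)+1 : ℝ)))⁻¹ ≠ 0 := by positivity
    have := (smul_eq_zero.mp h).resolve_left hne
    linear_combination this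
  have hc0 : c 0 = 0 := by
    have hsucc : Summable (fun k : ℕ => ‖c (k+1)‖ ^ (2:ℕ)) :=
      (summable_nat_add_iff (f := fun k => ‖c k‖ ^ (2:ℕ)) 1).2 (stmt6_summable_sq c)
    have hconst : (fun k : ℕ => ‖c (k+1)‖ ^ (2:ℕ)) = fun _ : ℕ => ‖c 0‖ ^ (2:ℕ) := by
      funext k; rw [hsum k, norm_neg]
    rw [hconst] at hsucc
    have htend := hsucc.tendsto_atTop_zero
    have := tendsto_nhds_unique htend tendsto_const_nhds
    have hnorm : ‖c 0‖ = 0 := by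
      have := this.symm
      nlinarith [norm_nonneg (c 0)]
    exact norm_eq_zero.mp hnorm
  have : c = 0 := by
    apply lp.ext
    funext k
    show c k = 0
    cases k with
    | zero => exact hc0
    | succ m => rw [hsum m, hc0, neg_zero]
  have := sub_eq_zero.mp (hc ▸ this)
  exact this

end StmtAux

private lemma stmt6B_seq {n : ℕ} (hn : n ≠ 0) :
    stmt6B (stmt6Seq n) = lp.single 2 (n-1) (1 : ℂ) := by
  apply lp.ext
  funext k
  rw [stmt6B_apply]
  have hseq : ∀ j : ℕ, (stmt6Seq n) j = if j = n then (n : ℂ) else 0 := by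
    intro j
    simp only [stmt6Seq, if_neg hn, lp.coeFn_smul, Pi.smul_apply, smul_eq_mul]
    rw [lp.single_apply, Pi.single_apply]
    split_ifs <;> simp
  have hsingle : (lp.single 2 (n-1) (1 : ℂ) : ∀ _ : ℕ, ℂ) k = if k = n - 1 then 1 else 0 := by
    rw [lp.single_apply]; exact Pi.single_apply _ _ _
  rw [hseq (k+1), hseq 0, hsingle, if_neg (show ¬((0:ℕ) = n) from fun h => hn h.symm), add_zero]
  by_cases hkn : k + 1 = n
  · rw [if_pos hkn, if_pos (by omega)]
    subst hkn
    have hne : ((k:ℂ)+1) ≠ 0 := Nat.cast_add_one_ne_zero k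
    rw [Complex.real_smul]
    push_cast
    exact inv_mul_cancel₀ hne
  · rw [if_neg hkn, if_neg (by omega), smul_zero]

/-- The sequence `f_0 = 0`, `f_n = n e_n` (n ≥ 1) in `ℓ²(ℕ)` is an ICFC sequence
(some injective bounded operator maps it to a Parseval frame), yet its closed linear span is a
proper subspace of `ℓ²(ℕ)`. -/
theorem stmt6 :
    (∃ B : lp (fun _ : ℕ => ℂ) 2 →L[ℂ] lp (fun _ : ℕ => ℂ) 2, Function.Injective B ∧
      ∀ f : lp (fun _ : ℕ => ℂ) 2,
        HasSum (fun n => ‖⟪f, B (stmt6Seq n)⟫‖ ^ 2) (‖f‖ ^ 2)) ∧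
    (Submodule.span ℂ (Set.range stmt6Seq)).topologicalClosure ≠ ⊤ := by
  constructor
  · refine ⟨stmt6B, stmt6B_injective, fun f => ?_⟩
    have hterm : (fun n : ℕ => ‖⟪f, stmt6B (stmt6Seq n)⟫‖ ^ 2)
        = fun n : ℕ => if n = 0 then 0 else ‖f (n-1)‖ ^ 2 := by
      funext n
      by_cases hn : n = 0
      · subst hn
        simp [stmt6Seq]
      · rw [if_neg hn, stmt6B_seq hn, lp.inner_single_right]
        simp [RCLike.inner_apply]
    rw [hterm]
    have hg : HasSum (fun m : ℕ => ‖f m‖ ^ (2:ℕ)) (‖f‖ ^ (2:ℕ)) := by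
      have := lp.hasSum_norm stmt6_ptrpos f
      simpa [stmt6_ptr, Real.rpow_natCast] using this
    have hvanish : ∀ x ∉ Set.range Nat.succ,
        (fun n : ℕ => if n = 0 then (0:ℝ) else ‖f (n-1)‖ ^ 2) x = 0 := by
      intro x hx
      have hx0 : x = 0 := by
        rcases x with _ | m
        · rfl
        · exact absurd ⟨m, rfl⟩ hx
      simp [hx0]
    have hcomp : ((fun n : ℕ => if n = 0 then (0:ℝ) else ‖f (n-1)‖ ^ 2) ∘ Nat.succ)
        = fun m : ℕ => ‖f m‖ ^ (2:ℕ) := by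
      funext m; simp [Function.comp]
    exact (Nat.succ_injective.hasSum_iff hvanish).mp (by rw [hcomp]; exact hg)
  · intro htop
    set φ : lp (fun _ : ℕ => ℂ) 2 →L[ℂ] ℂ := innerSL ℂ (lp.single 2 0 (1:ℂ)) with hφ
    have hker : (Submodule.span ℂ (Set.range stmt6Seq)) ≤ LinearMap.ker (φ : lp (fun _ : ℕ => ℂ) 2 →ₗ[ℂ] ℂ) := by
      rw [Submodule.span_le]
      rintro x ⟨n, rfl⟩
      simp only [SetLike.mem_coe, LinearMap.mem_ker]
      rw [hφ, ContinuousLinearMap.coe_coe, innerSL_apply_apply, lp.inner_single_left]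
      by_cases hn : n = 0
      · simp [stmt6Seq, hn]
      · have h0 : (stmt6Seq n) 0 = 0 := by
          simp only [stmt6Seq, if_neg hn, lp.coeFn_smul, Pi.smul_apply, smul_eq_mul]
          rw [lp.single_apply_ne _ _ _ (fun h => hn h.symm), mul_zero]
        rw [h0]
        simp
    have hclos := Submodule.topologicalClosure_minimal _ hker (ContinuousLinearMap.isClosed_ker φ)
    rw [htop] at hclos
    have hmem : lp.single 2 0 (1:ℂ) ∈ LinearMap.ker (φ : lp (fun _ : ℕ => ℂ) 2 →ₗ[ℂ] ℂ) := hclos Submodule.mem_top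
    have : φ (lp.single 2 0 (1:ℂ)) = 1 := by
      rw [hφ, innerSL_apply_apply, lp.inner_single_left, lp.single_apply_self]
      simp
    rw [LinearMap.mem_ker, ContinuousLinearMap.coe_coe, this] at hmem
    exact one_ne_zero hmem
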